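/- Let q be a positive integer and let φ : [0,∞) → ℝ^q be continuous and bounded. Then the following are equivalent: (i) there exist C_c > 0 and t_c > 0 such that ∫₀^{t_c} φ(s)φ(s)ᵀ ds − C_c·I_q is positive semidefinite (interval excitation); (ii) there exist times t₁, …, t_q > 0 such that the vectors φ(t₁), …, φ(t_q) are linearly independent (identifiability of the linear regression equation y(t) = φ(t)ᵀθ). (Continuous-time version of Proposition 1.) -/

import Mathlib

open Matrix

section Aux

variable {q : ℕ}

/-- Quadratic form of the Gram-integral matrix equals the integral of the squared
scalar regressor. -/
lemma quad_form_eq (φ : ℝ → Fin q → ℝ) (hcont : ContinuousOn φ (Set.Ici 0))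
    {tc : ℝ} (htc : 0 ≤ tc) (v : Fin q → ℝ) :
    v ⬝ᵥ ((Matrix.of fun i j => ∫ s in (0:ℝ)..tc, φ s i * φ s j) *ᵥ v)
      = ∫ s in (0:ℝ)..tc, (v ⬝ᵥ φ s) ^ 2 := by
  have hci : ∀ i : Fin q, ContinuousOn (fun s => φ s i) (Set.uIcc 0 tc) := fun i =>
    ((continuous_apply i).comp_continuousOn hcont).mono
      (by rw [Set.uIcc_of_le htc]; exact Set.Icc_subset_Ici_self)
  have hint : ∀ i j : Fin q,
      IntervalIntegrable (fun s => v i * v j * (φ s i * φ s j)) MeasureTheory.volume 0 tc :=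
    fun i j => (continuousOn_const.mul ((hci i).mul (hci j))).intervalIntegrable
  have hintsum : ∀ i : Fin q,
      IntervalIntegrable (fun s => ∑ j, v i * v j * (φ s i * φ s j))
        MeasureTheory.volume 0 tc := by
    intro i
    apply ContinuousOn.intervalIntegrable
    exact continuousOn_finset_sum _ fun j _ => continuousOn_const.mul ((hci i).mul (hci j))
  have key : v ⬝ᵥ ((Matrix.of fun i j => ∫ s in (0:ℝ)..tc, φ s i * φ s j) *ᵥ v)
      = ∑ i, ∑ j, ∫ s in (0:ℝ)..tc, v i * v j * (φ s i * φ s j) := by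
    simp only [dotProduct, Matrix.mulVec, dotProduct, Matrix.of_apply, Finset.mul_sum]
    refine Finset.sum_congr rfl fun i _ => Finset.sum_congr rfl fun j _ => ?_
    rw [intervalIntegral.integral_const_mul]
    ring
  rw [key]
  calc ∑ i, ∑ j, ∫ s in (0:ℝ)..tc, v i * v j * (φ s i * φ s j)
      = ∑ i, ∫ s in (0:ℝ)..tc, ∑ j, v i * v j * (φ s i * φ s j) := by
        refine Finset.sum_congr rfl fun i _ => ?_
        rw [intervalIntegral.integral_finset_sum (fun j _ => hint i j)]
    _ = ∫ s in (0:ℝ)..tc, ∑ i, ∑ j, v i * v j * (φ s i * φ s j) := by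
        rw [intervalIntegral.integral_finset_sum (fun i _ => hintsum i)]
    _ = ∫ s in (0:ℝ)..tc, (v ⬝ᵥ φ s) ^ 2 := by
        refine intervalIntegral.integral_congr fun s _ => ?_
        rw [sq, dotProduct, Finset.sum_mul_sum]
        exact Finset.sum_congr rfl fun i _ => Finset.sum_congr rfl fun j _ => by ring

/-- A nonnegative continuous function on `[0,∞)` that is positive at some
`c ∈ (0, tc]` has positive integral over `[0, tc]`. -/
lemma integral_pos_of_pos_at (f : ℝ → ℝ) (hf : ContinuousOn f (Set.Ici 0))
    (hnn : ∀ s, 0 ≤ f s) {c tc : ℝ} (hc : 0 < c) (hctc : c ≤ tc) (hfc : 0 < f c) :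
    0 < ∫ s in (0:ℝ)..tc, f s := by
  have htc : (0:ℝ) ≤ tc := le_trans hc.le hctc
  have hfint : ∀ a b : ℝ, 0 ≤ a → 0 ≤ b → IntervalIntegrable f MeasureTheory.volume a b := by
    intro a b ha hb
    exact (hf.mono (fun x hx => le_trans (le_inf ha hb) hx.1)).intervalIntegrable
  have hca : ContinuousAt f c := hf.continuousAt (Ici_mem_nhds hc)
  have hev : ∀ᶠ x in nhds c, f c / 2 < f x :=
    hca.eventually (eventually_gt_nhds (half_lt_self hfc))
  obtain ⟨ε, hε, hball⟩ := Metric.eventually_nhds_iff.mp hev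
  set a : ℝ := max (c - ε / 2) (c / 2) with ha
  have ha0 : 0 < a := lt_max_of_lt_right (half_pos hc)
  have hac : a < c := max_lt (by linarith) (by linarith)
  have hmem : ∀ x ∈ Set.Icc a c, f c / 2 ≤ f x := by
    intro x hx
    refine le_of_lt (hball ?_)
    rw [Real.dist_eq, abs_lt]
    have h1 : c - ε / 2 ≤ a := le_max_left _ _
    constructor <;> [linarith [hx.1]; linarith [hx.2]]
  have h2 : (c - a) * (f c / 2) ≤ ∫ s in a..c, f s := by
    have h' := intervalIntegral.integral_mono_on hac.le intervalIntegrable_const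
      (hfint a c ha0.le hc.le) hmem
    rwa [intervalIntegral.integral_const, smul_eq_mul] at h'
  have e1 : (∫ s in (0:ℝ)..a, f s) + (∫ s in a..c, f s) = ∫ s in (0:ℝ)..c, f s :=
    intervalIntegral.integral_add_adjacent_intervals (hfint 0 a le_rfl ha0.le)
      (hfint a c ha0.le hc.le)
  have e2 : (∫ s in (0:ℝ)..c, f s) + (∫ s in c..tc, f s) = ∫ s in (0:ℝ)..tc, f s :=
    intervalIntegral.integral_add_adjacent_intervals (hfint 0 c le_rfl hc.le)
      (hfint c tc hc.le htc)
  have n1 : 0 ≤ ∫ s in (0:ℝ)..a, f s :=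
    intervalIntegral.integral_nonneg ha0.le fun u _ => hnn u
  have n3 : 0 ≤ ∫ s in c..tc, f s :=
    intervalIntegral.integral_nonneg hctc fun u _ => hnn u
  have hpos2 : 0 < ∫ s in a..c, f s :=
    lt_of_lt_of_le (mul_pos (sub_pos.mpr hac) (half_pos hfc)) h2
  linarith

/-- For a positive definite real matrix `M`, `M - C • 1` is positive semidefinite for
`C` the least eigenvalue. -/
lemma exists_shift_posSemidef (hq : 0 < q) {M : Matrix (Fin q) (Fin q) ℝ}
    (hM : M.PosDef) :
    ∃ C : ℝ, 0 < C ∧ (M - C • (1 : Matrix (Fin q) (Fin q) ℝ)).PosSemidef := by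
  classical
  haveI : Nonempty (Fin q) := ⟨⟨0, hq⟩⟩
  set ev := hM.1.eigenvalues with hev
  set C := Finset.univ.inf' Finset.univ_nonempty ev with hCdef
  have hCpos : 0 < C := (Finset.lt_inf'_iff _).2 fun i _ => hM.eigenvalues_pos i
  refine ⟨C, hCpos, ?_⟩
  set U : Matrix (Fin q) (Fin q) ℝ := (hM.1.eigenvectorUnitary : Matrix (Fin q) (Fin q) ℝ)
    with hU
  have hUU : U * star U = 1 := Matrix.mem_unitaryGroup_iff.mp hM.1.eigenvectorUnitary.2
  have hdiag : Matrix.diagonal (RCLike.ofReal ∘ ev) = Matrix.diagonal ev := by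
    congr 1
  have key : M - C • 1 = U * Matrix.diagonal (fun i => ev i - C) * Uᴴ := by
    rw [← Matrix.star_eq_conjTranspose]
    calc M - C • 1
        = U * Matrix.diagonal ev * star U - C • (U * star U) := by
          rw [hUU]
          nth_rewrite 1 [hM.1.spectral_theorem]
          rw [hdiag, Unitary.conjStarAlgAut_apply]
      _ = U * Matrix.diagonal ev * star U - U * (C • 1) * star U := by
          rw [Matrix.mul_smul, Matrix.mul_one, Matrix.smul_mul]
      _ = U * (Matrix.diagonal ev - C • 1) * star U := by
          rw [Matrix.mul_sub, Matrix.sub_mul]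
      _ = U * Matrix.diagonal (fun i => ev i - C) * star U := by
          rw [Matrix.smul_one_eq_diagonal, ← Matrix.diagonal_sub]
  rw [key]
  refine Matrix.PosSemidef.mul_mul_conjTranspose_same ?_ U
  refine Matrix.PosSemidef.diagonal ?_
  intro i
  exact sub_nonneg.mpr (Finset.inf'_le _ (Finset.mem_univ i))

end Aux

/-- Continuous-time version of Proposition 1: interval excitation of a continuous
bounded regressor `φ` is equivalent to identifiability of the linear regression
equation. -/
theorem ie_iff_identifiable_continuous (q : ℕ) (hq : 0 < q) (φ : ℝ → Fin q → ℝ)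
    (hcont : ContinuousOn φ (Set.Ici 0))
    (hbdd : ∃ B : ℝ, ∀ t ≥ (0 : ℝ), Real.sqrt (φ t ⬝ᵥ φ t) ≤ B) :
    (∃ C_c : ℝ, 0 < C_c ∧ ∃ t_c : ℝ, 0 < t_c ∧
      (Matrix.of (fun i j => ∫ s in (0 : ℝ)..t_c, φ s i * φ s j)
        - C_c • (1 : Matrix (Fin q) (Fin q) ℝ)).PosSemidef) ↔
    (∃ t : Fin q → ℝ, (∀ i, 0 < t i) ∧ LinearIndependent ℝ (fun i => φ (t i))) := by
  classical
  constructor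
  · rintro ⟨C, hC, tc, htc, hpsd⟩
    set S : Set (Fin q → ℝ) := φ '' Set.Ioc 0 tc with hS
    have hspan : Submodule.span ℝ S = ⊤ := by
      by_contra hne
      obtain ⟨f, hf0, hfbot⟩ := (Submodule.span ℝ S).exists_dual_map_eq_bot_of_lt_top
        (lt_top_iff_ne_top.mpr hne) inferInstance
      set v : Fin q → ℝ := fun i => f (fun j => if i = j then 1 else 0) with hv
      have hfv : ∀ w : Fin q → ℝ, f w = w ⬝ᵥ v := by
        intro w
        conv_lhs => rw [pi_eq_sum_univ w]
        rw [map_sum]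
        simp [dotProduct, hv]
      have hvne : v ≠ 0 := by
        intro h
        apply hf0
        apply LinearMap.ext
        intro w
        rw [hfv, h]
        simp
      have horth : ∀ s ∈ Set.Ioc (0:ℝ) tc, v ⬝ᵥ φ s = 0 := by
        intro s hs
        have hmem : φ s ∈ Submodule.span ℝ S := Submodule.subset_span ⟨s, hs, rfl⟩
        have hfs : f (φ s) = 0 := by
          have h1 : f (φ s) ∈ (Submodule.span ℝ S).map f := Submodule.mem_map_of_mem hmem
          rwa [hfbot, Submodule.mem_bot] at h1
        rw [hfv] at hfs
        rw [dotProduct_comm]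
        exact hfs
      have hquad := quad_form_eq φ hcont htc.le v
      have hzero : (∫ s in (0:ℝ)..tc, (v ⬝ᵥ φ s) ^ 2) = 0 := by
        have : (∫ s in (0:ℝ)..tc, (v ⬝ᵥ φ s) ^ 2) = ∫ s in (0:ℝ)..tc, (0:ℝ) := by
          apply intervalIntegral.integral_congr_ae
          filter_upwards with x hx
          rw [Set.uIoc_of_le htc.le] at hx
          rw [horth x hx]
          ring
        simp [this]
      have hsv : star v = v := by
        funext i
        simp
      have h2 := (posSemidef_iff_dotProduct_mulVec.mp hpsd).2 v
      rw [hsv, Matrix.sub_mulVec, dotProduct_sub, hquad, hzero,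
        Matrix.smul_mulVec, Matrix.one_mulVec, dotProduct_smul, smul_eq_mul] at h2
      have hvv : 0 < v ⬝ᵥ v := by
        have h0 : v ⬝ᵥ v ≠ 0 := fun h => hvne (dotProduct_self_eq_zero.mp h)
        have hnn : 0 ≤ v ⬝ᵥ v := Finset.sum_nonneg fun i _ => mul_self_nonneg _
        exact lt_of_le_of_ne hnn (Ne.symm h0)
      nlinarith
    obtain ⟨b, hbS, hbspan, hbli⟩ := exists_linearIndependent ℝ S
    rw [hspan] at hbspan
    have hfin : b.Finite := hbli.setFinite
    haveI := hfin.fintype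
    have hcard : Fintype.card b = q := by
      have h1 := finrank_span_set_eq_card hbli
      rw [hbspan, finrank_top, Module.finrank_fin_fun, Set.toFinset_card] at h1
      exact h1.symm
    obtain e : Fin q ≃ b := (Fintype.equivFinOfCardEq hcard).symm
    have hch : ∀ x : b, ∃ s : ℝ, s ∈ Set.Ioc (0:ℝ) tc ∧ φ s = x := by
      intro x
      obtain ⟨s, hs, hx⟩ := hbS x.2
      exact ⟨s, hs, hx⟩
    choose g hg1 hg2 using hch
    refine ⟨fun i => g (e i), fun i => (hg1 (e i)).1, ?_⟩
    have heq : (fun i => φ (g (e i))) = fun i => ((e i : Fin q → ℝ)) :=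
      funext fun i => hg2 (e i)
    rw [heq]
    exact hbli.comp _ e.injective
  · rintro ⟨t, htpos, hli⟩
    haveI : Nonempty (Fin q) := ⟨⟨0, hq⟩⟩
    set tc := Finset.univ.sup' Finset.univ_nonempty t with htcdef
    have htle : ∀ i, t i ≤ tc := fun i => Finset.le_sup' t (Finset.mem_univ i)
    have htc : 0 < tc := lt_of_lt_of_le (htpos ⟨0, hq⟩) (htle _)
    have hherm : (Matrix.of fun i j => ∫ s in (0:ℝ)..tc, φ s i * φ s j).IsHermitian := by
      rw [Matrix.IsHermitian]
      ext i j
      simp only [Matrix.conjTranspose_apply, Matrix.of_apply, star_trivial]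
      exact intervalIntegral.integral_congr fun s _ => mul_comm _ _
    have hspan : Submodule.span ℝ (Set.range fun i => φ (t i)) = ⊤ :=
      hli.span_eq_top_of_card_eq_finrank (by simp [Module.finrank_fin_fun])
    have hexists : ∀ v : Fin q → ℝ, v ≠ 0 → ∃ i, v ⬝ᵥ φ (t i) ≠ 0 := by
      intro v hv
      by_contra h
      push_neg at h
      apply hv
      let L : (Fin q → ℝ) →ₗ[ℝ] ℝ :=
        { toFun := fun w => v ⬝ᵥ w
          map_add' := fun a b => dotProduct_add v a b
          map_smul' := fun c a => by simp [dotProduct_smul] }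
      have hLtop : ∀ w : Fin q → ℝ, L w = 0 := by
        intro w
        have hle : Submodule.span ℝ (Set.range fun i => φ (t i)) ≤ LinearMap.ker L := by
          rw [Submodule.span_le]
          rintro x ⟨i, rfl⟩
          exact h i
        exact hle (hspan ▸ Submodule.mem_top)
      exact dotProduct_self_eq_zero.mp (hLtop v)
    have hcd : ∀ v : Fin q → ℝ, ContinuousOn (fun s => v ⬝ᵥ φ s) (Set.Ici (0:ℝ)) := by
      intro v
      simp only [dotProduct]
      exact continuousOn_finset_sum _ fun i _ =>
        continuousOn_const.mul ((continuous_apply i).comp_continuousOn hcont)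
    have hpos : (Matrix.of fun i j => ∫ s in (0:ℝ)..tc, φ s i * φ s j).PosDef := by
      refine posDef_iff_dotProduct_mulVec.mpr ⟨hherm, fun v hv => ?_⟩
      have hsv : star v = v := by
        funext i
        simp
      rw [hsv, quad_form_eq φ hcont htc.le v]
      obtain ⟨i, hi⟩ := hexists v hv
      refine integral_pos_of_pos_at _ ((hcd v).pow 2) (fun s => sq_nonneg _)
        (htpos i) (htle i) ?_
      exact lt_of_le_of_ne (sq_nonneg _) (Ne.symm (pow_ne_zero 2 hi))
    obtain ⟨C, hCpos, hpsd⟩ := exists_shift_posSemidef hq hpos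
    exact ⟨C, hCpos, tc, htc, hpsd⟩
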